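/- Let X̄ be a formal O-module over k̆ of finite height h > 0 and let C ∈ CNL. Between any two deformations X_C and X'_C of X̄ to C there exists at most one isomorphism of formal O-modules over C that reduces to the identity modulo the maximal ideal m_C. -/

import Mathlib

/-!
STATEMENT 4.  Let X̄ be a formal O-module over k̆ of finite height h > 0 and let
C ∈ CNL.  Between any two deformations X_C and X'_C of X̄ to C there exists at
most one isomorphism of formal O-modules over C that reduces to the identity
modulo the maximal ideal m_C.

Conventions as in STATEMENT 3: O is a complete discrete valuation ring with
finite residue field and uniformizer ϖ; Ŏ a complete DVR, unramified over O,
with algebraically closed residue field k̆ algebraic over k; CNL is the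
category of complete noetherian local Ŏ-algebras with residue field k̆.
-/


set_option maxHeartbeats 8000000

noncomputable section

namespace FormalMod

variable {B S : Type} [CommRing B] [CommRing S]

/-- `evalAt c u = ∑_n (c n) · u^n`, the evaluation of the series with coefficients
`c : ℕ → B⟦X⟧` at `u ∈ B⟦X⟧`; this is the correct value whenever the constant
term of `u` vanishes (the only case in which we use it). -/
def evalAt (c : ℕ → PowerSeries B) (u : PowerSeries B) : PowerSeries B :=
  PowerSeries.mk fun m =>
    ∑ n ∈ Finset.range (m + 1), PowerSeries.coeff (R := B) m (c n * u ^ n)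

/-- Composition `g ∘ f = g(f(X))` of univariate formal power series (for `f` with
vanishing constant term). -/
def comp (g f : PowerSeries B) : PowerSeries B :=
  evalAt (fun n => PowerSeries.C (R := B) (PowerSeries.coeff (R := B) n g)) f

/-- Bivariate formal power series `B[[X,Y]] = (B[[Y]])[[X]]`. -/
abbrev Biv (B : Type) [CommRing B] := PowerSeries (PowerSeries B)

/-- The (m,n)-th coefficient (of `X^m Y^n`) of a bivariate power series. -/
def coeff2 (m n : ℕ) (F : Biv B) : B :=
  PowerSeries.coeff (R := B) n (PowerSeries.coeff (R := (PowerSeries B)) m F)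

/-- `subst2 ψ F u v = F(u, v)`: substitution of both arguments of a bivariate
series `F ∈ B[[X,Y]]`, `F = ∑_n a_n(Y) Xⁿ ↦ ∑_n a_n(v) uⁿ`, with coefficients
transported along `ψ : B →+* S` (meaningful when `u`, `v` have vanishing
constant terms). -/
def subst2 (ψ : B →+* S) (F : Biv B) (u v : PowerSeries S) : PowerSeries S :=
  evalAt (fun n => comp (PowerSeries.map ψ (PowerSeries.coeff (R := (PowerSeries B)) n F)) v) u

/-- Associativity `Φ(Φ(X,Y),Z) = Φ(X,Φ(Y,Z))` of a bivariate power series,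
written out in `B[[X,Y,Z]] = ((B[[Z]])[[Y]])[[X]]`. -/
def IsAssoc (F : Biv B) : Prop :=
  subst2 ((PowerSeries.C (R := (PowerSeries B))).comp (PowerSeries.C (R := B))) F
      (PowerSeries.map (PowerSeries.map (PowerSeries.C (R := B))) F)
      (PowerSeries.C (R := (PowerSeries (PowerSeries B)))
        (PowerSeries.C (R := (PowerSeries B)) PowerSeries.X))
    = subst2 ((PowerSeries.C (R := (PowerSeries B))).comp (PowerSeries.C (R := B))) F
      PowerSeries.X
      (PowerSeries.C (R := (PowerSeries (PowerSeries B))) F)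

/-- A (one-dimensional, commutative) formal group law over `B`:
`Φ(X,Y) = Φ(Y,X)`, `Φ(X,0) = X`, `Φ(Φ(X,Y),Z) = Φ(X,Φ(Y,Z))`. -/
structure FormalGroup (B : Type) [CommRing B] where
  F : Biv B
  comm : ∀ m n, coeff2 m n F = coeff2 n m F
  unit : PowerSeries.map (PowerSeries.constantCoeff (R := B)) F = PowerSeries.X
  assoc : IsAssoc F

/-- `β(F(X,Y)) = G(β(X), β(Y))`: `β` is a homomorphism of formal group laws. -/
def IsLawHom (F G : Biv B) (β : PowerSeries B) : Prop :=
  comp (PowerSeries.map (PowerSeries.C (R := B)) β) F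
    = subst2 (PowerSeries.C (R := B)) G (PowerSeries.map (PowerSeries.C (R := B)) β)
        (PowerSeries.C (R := (PowerSeries B)) β)

/-- A formal `O`-module over the `O`-algebra `(B, α)`: a formal group law `Φ`
together with a ring homomorphism `[·] : O → End(Φ)` with `D ∘ [·] = α`. -/
structure FormalOModule (O B : Type) [CommRing O] [CommRing B] (α : O →+* B)
    extends FormalGroup B where
  act : O → PowerSeries B
  act_constantCoeff : ∀ c, PowerSeries.constantCoeff (R := B) (act c) = 0
  act_deriv : ∀ c, PowerSeries.coeff (R := B) 1 (act c) = α c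
  act_hom : ∀ c, IsLawHom F F (act c)
  act_add : ∀ c d, act (c + d) = subst2 (RingHom.id B) F (act c) (act d)
  act_mul : ∀ c d, act (c * d) = comp (act c) (act d)
  act_one : act 1 = PowerSeries.X

/-- `β` is a homomorphism of formal `O`-modules `M → N` (over the same base). -/
def IsModuleHom {O B : Type} [CommRing O] [CommRing B] {α : O →+* B}
    (M N : FormalOModule O B α) (β : PowerSeries B) : Prop :=
  PowerSeries.constantCoeff (R := B) β = 0 ∧
  IsLawHom M.F N.F β ∧
  ∀ c, comp β (M.act c) = comp (N.act c) β

/-- `N` is the base change (pushforward) of `M` along `f : B →+* B'`. -/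
def IsBaseChange {O B B' : Type} [CommRing O] [CommRing B] [CommRing B']
    {α : O →+* B} {α' : O →+* B'} (f : B →+* B')
    (M : FormalOModule O B α) (N : FormalOModule O B' α') : Prop :=
  N.F = PowerSeries.map (PowerSeries.map f) M.F ∧
  ∀ c, N.act c = PowerSeries.map f (M.act c)

/-- The formal `O`-module `M` (over a base where `α ϖ = 0`) has height `h`:
`[ϖ]_M = γ(X^{q^h})` with `D γ ≠ 0`.  Here `q` is the residue cardinality of `O`. -/
def HasHeight {O B : Type} [CommRing O] [CommRing B] {α : O →+* B}
    (M : FormalOModule O B α) (ϖ : O) (q h : ℕ) : Prop :=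
  ∃ γ : PowerSeries B, PowerSeries.constantCoeff (R := B) γ = 0 ∧
    PowerSeries.coeff (R := B) 1 γ ≠ 0 ∧
    M.act ϖ = comp γ (PowerSeries.X ^ q ^ h)

end FormalMod

section Helpers
open FormalMod PowerSeries

variable {B : Type} [CommRing B] {S : Type} [CommRing S]

lemma coeff_comp' (g f : PowerSeries B) (m : ℕ) :
    coeff (R := B) m (comp g f) =
      ∑ n ∈ Finset.range (m + 1), coeff (R := B) n g * coeff (R := B) m (f ^ n) := by
  simp only [comp, evalAt, coeff_mk]
  exact Finset.sum_congr rfl fun n _ => by rw [coeff_C_mul]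

lemma comp_sub' (g₁ g₂ f : PowerSeries B) :
    comp (g₁ - g₂) f = comp g₁ f - comp g₂ f := by
  ext m
  simp only [map_sub, coeff_comp', ← Finset.sum_sub_distrib]
  exact Finset.sum_congr rfl fun n _ => sub_mul _ _ _

lemma map_comp' (ψ : B →+* S) (g f : PowerSeries B) :
    PowerSeries.map ψ (comp g f) = comp (PowerSeries.map ψ g) (PowerSeries.map ψ f) := by
  ext m
  rw [coeff_map, coeff_comp', coeff_comp', map_sum]
  refine Finset.sum_congr rfl fun n _ => ?_
  rw [map_mul, ← coeff_map, ← coeff_map, map_pow]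

lemma coeff_compXpow (γ : PowerSeries B) (Q m : ℕ) :
    coeff (R := B) m (comp γ (X ^ Q)) =
      ∑ n ∈ Finset.range (m + 1), if m = Q * n then coeff (R := B) n γ else 0 := by
  rw [coeff_comp']
  refine Finset.sum_congr rfl fun n _ => ?_
  rw [← pow_mul, coeff_X_pow]
  split <;> simp

lemma compXpow_lt {γ : PowerSeries B} {Q m : ℕ} (hγ0 : coeff (R := B) 0 γ = 0) (hm : m < Q) :
    coeff (R := B) m (comp γ (X ^ Q)) = 0 := by
  rw [coeff_compXpow]
  refine Finset.sum_eq_zero fun n hn => ?_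
  split_ifs with hc
  · rcases Nat.eq_zero_or_pos n with rfl | h0
    · exact hγ0
    · exfalso; have : Q ≤ Q * n := Nat.le_mul_of_pos_right _ h0; omega
  · rfl

lemma compXpow_Q (γ : PowerSeries B) {Q : ℕ} (hQ : 1 ≤ Q) :
    coeff (R := B) Q (comp γ (X ^ Q)) = coeff (R := B) 1 γ := by
  rw [coeff_compXpow]
  rw [Finset.sum_eq_single 1]
  · simp
  · intro n _ hne
    split_ifs with hc
    · exact absurd (Nat.eq_of_mul_eq_mul_left (by omega) (by omega : Q * 1 = Q * n)) (Ne.symm hne)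
    · rfl
  · intro hmem; exact absurd (Finset.mem_range.2 (by omega)) hmem

lemma compXpow_der (γ : PowerSeries B) {Q : ℕ} (hQ : (Q : B) = 0) (k : ℕ) :
    (k : B) * coeff (R := B) k (comp γ (X ^ Q)) = 0 := by
  rw [coeff_compXpow, Finset.mul_sum]
  refine Finset.sum_eq_zero fun n hn => ?_
  split_ifs with hc
  · subst hc; push_cast; rw [hQ]; ring
  · exact mul_zero _

lemma coeff_mul_mem (J : Ideal B) {f : PowerSeries B} {a : ℕ}
    (hf : ∀ k, coeff (R := B) k f ∈ J ^ a) (g : PowerSeries B) :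
    ∀ k, coeff (R := B) k (g * f) ∈ J ^ a := by
  intro k
  rw [coeff_mul]
  exact Ideal.sum_mem _ fun p _ => Ideal.mul_mem_left _ _ (hf p.2)

lemma coeff_mul_mem₂ (J : Ideal B) {f g : PowerSeries B} {a b : ℕ}
    (hf : ∀ k, coeff (R := B) k f ∈ J ^ a) (hg : ∀ k, coeff (R := B) k g ∈ J ^ b) :
    ∀ k, coeff (R := B) k (f * g) ∈ J ^ (a + b) := by
  intro k
  rw [coeff_mul, pow_add]
  exact Ideal.sum_mem _ fun p _ => Ideal.mul_mem_mul (hf p.1) (hg p.2)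

lemma lemA (J : Ideal B) (n : ℕ) (hn : 1 ≤ n) (v b b' : PowerSeries B)
    (hε : ∀ k, coeff (R := B) k (b' - b) ∈ J ^ n)
    (hv : ∀ k : ℕ, (k : B) * coeff (R := B) k v ∈ J) :
    ∀ m, coeff (R := B) m (comp v b' - comp v b) ∈ J ^ (n + 1) := by
  have hT : ∀ j, ∀ k, coeff (R := B) k (b' ^ j - b ^ j) ∈ J ^ n := by
    intro j
    induction j with
    | zero => simp
    | succ j ih =>
      intro k
      have key : b' ^ (j+1) - b ^ (j+1) = b' * (b' ^ j - b ^ j) + b ^ j * (b' - b) := by ring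
      rw [key, map_add]
      exact add_mem (coeff_mul_mem J ih b' k) (coeff_mul_mem J hε (b ^ j) k)
  have hS : ∀ j, ∀ k,
      coeff (R := B) k (b' ^ (j+1) - b ^ (j+1) - ((j+1 : ℕ) : PowerSeries B) * b ^ j * (b' - b))
        ∈ J ^ (2*n) := by
    intro j
    induction j with
    | zero =>
      intro k
      have h0 : b' ^ (0+1) - b ^ (0+1) - ((0+1 : ℕ) : PowerSeries B) * b ^ 0 * (b' - b)
          = 0 := by push_cast; ring
      rw [h0, map_zero]; exact zero_mem _
    | succ j ih =>
      intro k
      have key : b' ^ (j+1+1) - b ^ (j+1+1) - ((j+1+1 : ℕ) : PowerSeries B) * b ^ (j+1) * (b' - b)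
          = b' * (b' ^ (j+1) - b ^ (j+1) - ((j+1 : ℕ) : PowerSeries B) * b ^ j * (b' - b))
            + ((j+1 : ℕ) : PowerSeries B) * b ^ j * ((b' - b) * (b' - b)) := by
        push_cast; ring
      rw [key, map_add]
      refine add_mem (coeff_mul_mem J ih b' k) ?_
      have h2 : ∀ k, coeff (R := B) k ((b' - b) * (b' - b)) ∈ J ^ (2*n) := by
        have := coeff_mul_mem₂ J hε hε
        simpa [two_mul] using this
      exact coeff_mul_mem J h2 _ k
  intro m
  have hdiff : coeff (R := B) m (comp v b' - comp v b)
      = ∑ j ∈ Finset.range (m+1), coeff (R := B) j v * coeff (R := B) m (b' ^ j - b ^ j) := by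
    rw [map_sub, coeff_comp', coeff_comp', ← Finset.sum_sub_distrib]
    exact Finset.sum_congr rfl fun j _ => by rw [map_sub, mul_sub]
  rw [hdiff]
  refine Ideal.sum_mem _ fun j hj => ?_
  match j with
  | 0 => simpa using zero_mem (J ^ (n+1))
  | (i+1) =>
    have h1 : coeff (R := B) m (((i+1 : ℕ) : PowerSeries B) * b ^ i * (b' - b))
        = ((i+1 : ℕ) : B) * coeff (R := B) m (b ^ i * (b' - b)) := by
      rw [mul_assoc, ← map_natCast (PowerSeries.C (R := B)) (i+1), coeff_C_mul]
    have split : coeff (R := B) m (b' ^ (i+1) - b ^ (i+1))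
        = coeff (R := B) m (b' ^ (i+1) - b ^ (i+1) - ((i+1 : ℕ) : PowerSeries B) * b ^ i * (b' - b))
          + ((i+1 : ℕ) : B) * coeff (R := B) m (b ^ i * (b' - b)) := by
      simp only [map_sub, h1]; ring
    rw [split, mul_add]
    refine add_mem ?_ ?_
    · have h2n : J ^ (2*n) ≤ J ^ (n+1) := Ideal.pow_le_pow_right (by omega)
      exact Ideal.mul_mem_left _ _ (h2n (hS i m))
    · have hmem : coeff (R := B) m (b ^ i * (b' - b)) ∈ J ^ n := coeff_mul_mem J hε (b ^ i) m
      have hrw : coeff (R := B) (i+1) v * (((i+1 : ℕ) : B) * coeff (R := B) m (b ^ i * (b' - b)))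
          = (((i+1 : ℕ) : B) * coeff (R := B) (i+1) v) * coeff (R := B) m (b ^ i * (b' - b)) := by ring
      rw [hrw, pow_succ']
      exact Ideal.mul_mem_mul (hv (i+1)) hmem

lemma lemB {B : Type} [CommRing B] [IsLocalRing B] (n Q : ℕ) (hQ : 1 ≤ Q)
    (ε u : PowerSeries B)
    (hε0 : coeff (R := B) 0 ε = 0)
    (hε : ∀ k, coeff (R := B) k ε ∈ (IsLocalRing.maximalIdeal B) ^ n)
    (hcomp : ∀ m, coeff (R := B) m (comp ε u) ∈ (IsLocalRing.maximalIdeal B) ^ (n+1))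
    (hu : ∀ j, j < Q → coeff (R := B) j u ∈ IsLocalRing.maximalIdeal B)
    (huQ : coeff (R := B) Q u ∉ IsLocalRing.maximalIdeal B) :
    ∀ k, coeff (R := B) k ε ∈ (IsLocalRing.maximalIdeal B) ^ (n+1) := by
  set I := IsLocalRing.maximalIdeal B with hI
  set r := IsLocalRing.residue B with hr
  set ub := PowerSeries.map r u with hub
  have hresid : ∀ j m, r (coeff (R := B) m (u ^ j)) = coeff m (ub ^ j) := by
    intro j m
    rw [hub, ← map_pow, coeff_map]
  have hdvd : X ^ Q ∣ ub := by
    rw [X_pow_dvd_iff]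
    intro m hm
    rw [hub, coeff_map]
    exact Ideal.Quotient.eq_zero_iff_mem.2 (hu m hm)
  obtain ⟨w, hw⟩ := hdvd
  have hgt0 : ∀ j m, m < Q * j → coeff (R := B) m (u ^ j) ∈ I := by
    intro j m hm
    have hd : X ^ (Q * j) ∣ ub ^ j := by
      rw [hw, mul_pow, ← pow_mul]
      exact Dvd.intro _ rfl
    have h0 : coeff m (ub ^ j) = 0 := (X_pow_dvd_iff.1 hd) m hm
    exact Ideal.Quotient.eq_zero_iff_mem.1 ((hresid j m).trans h0)
  have hwQ : coeff Q ub = coeff 0 w := by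
    rw [hw]
    simpa using coeff_X_pow_mul w Q 0
  have hQne : coeff Q ub ≠ 0 := by
    intro hzero
    exact huQ (Ideal.Quotient.eq_zero_iff_mem.1 (by rw [hub, coeff_map] at hzero; exact hzero))
  have hcku : ∀ k, 1 ≤ k → coeff (R := B) (k*Q) (u ^ k) ∉ I := by
    intro k hk hmem
    have h1 : r (coeff (R := B) (k*Q) (u ^ k)) = 0 := Ideal.Quotient.eq_zero_iff_mem.2 hmem
    have h2 : r (coeff (R := B) (k*Q) (u ^ k)) = (coeff 0 w) ^ k := by
      rw [hresid, hw, mul_pow, ← pow_mul]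
      calc coeff (k*Q) ((X ^ (Q*k)) * w ^ k) = coeff 0 (w ^ k) := by
            rw [show k*Q = 0 + Q*k by ring]; exact coeff_X_pow_mul _ _ _
        _ = (coeff 0 w) ^ k := by
            simp [coeff_zero_eq_constantCoeff, map_pow]
    have hw0 : coeff 0 w ≠ 0 := by rw [← hwQ]; exact hQne
    exact pow_ne_zero k hw0 (h2.symm.trans h1)
  intro k
  induction k using Nat.strong_induction_on with
  | _ k ih =>
    rcases Nat.eq_zero_or_pos k with rfl | hk
    · rw [hε0]; exact zero_mem _
    · have hsum : ∑ j ∈ Finset.range (k*Q+1), coeff (R := B) j ε * coeff (R := B) (k*Q) (u ^ j)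
          ∈ I ^ (n+1) := by
        rw [← coeff_comp']; exact hcomp _
      have hk_mem : k ∈ Finset.range (k*Q+1) := Finset.mem_range.2 (by nlinarith)
      rw [← Finset.add_sum_erase _ _ hk_mem] at hsum
      have hrest : ∑ j ∈ (Finset.range (k*Q+1)).erase k,
          coeff (R := B) j ε * coeff (R := B) (k*Q) (u ^ j) ∈ I ^ (n+1) := by
        refine Ideal.sum_mem _ fun j hj => ?_
        obtain ⟨hjk, _⟩ := Finset.mem_erase.1 hj
        rcases lt_or_gt_of_ne hjk with hlt | hgt
        · rcases Nat.eq_zero_or_pos j with rfl | hj1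
          · rw [hε0, zero_mul]; exact zero_mem _
          · exact Ideal.mul_mem_right _ _ (ih j hlt)
        · have hc : coeff (R := B) (k*Q) (u ^ j) ∈ I := hgt0 j _ (by nlinarith)
          rw [pow_succ]
          exact Ideal.mul_mem_mul (hε j) hc
      have hmain : coeff (R := B) k ε * coeff (R := B) (k*Q) (u ^ k) ∈ I ^ (n+1) := by
        have := sub_mem hsum hrest
        simpa using this
      have hunit : IsUnit (coeff (R := B) (k*Q) (u ^ k)) := by
        have := hcku k hk
        simpa [hI, IsLocalRing.mem_maximalIdeal, mem_nonunits_iff] using this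
      obtain ⟨ζ, hζ⟩ := hunit
      have hfin : coeff (R := B) k ε = (coeff (R := B) k ε * coeff (R := B) (k*Q) (u ^ k)) * ↑ζ⁻¹ := by
        rw [← hζ, mul_assoc, Units.mul_inv, mul_one]
      rw [hfin]
      exact Ideal.mul_mem_right _ _ hmain
end Helpers


theorem deformation_isomorphism_unique
    (O : Type) [CommRing O] [IsDomain O] [IsDiscreteValuationRing O]
    (hOcompl : IsAdicComplete (IsLocalRing.maximalIdeal O) O)
    (hkfin : Finite (IsLocalRing.ResidueField O))
    (ϖ : O) (hϖ : Irreducible ϖ)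
    (Obr : Type) [CommRing Obr] [IsDomain Obr] [IsDiscreteValuationRing Obr]
    [Algebra O Obr] [IsLocalHom (algebraMap O Obr)]
    (hObrcompl : IsAdicComplete (IsLocalRing.maximalIdeal Obr) Obr)
    (hunram : Irreducible (algebraMap O Obr ϖ))
    [IsAlgClosed (IsLocalRing.ResidueField Obr)]
    (halg : ∀ x : IsLocalRing.ResidueField Obr,
      ∃ g : Polynomial (IsLocalRing.ResidueField O), g.Monic ∧
        Polynomial.eval₂ (IsLocalRing.ResidueField.map (algebraMap O Obr)) x g = 0)
    -- X̄: a formal O-module over k̆ of finite height h > 0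
    (h : ℕ) (hh : 0 < h)
    (Xbar : FormalMod.FormalOModule O (IsLocalRing.ResidueField Obr)
      ((IsLocalRing.residue Obr).comp (algebraMap O Obr)))
    (hht : FormalMod.HasHeight Xbar ϖ (Nat.card (IsLocalRing.ResidueField O)) h)
    -- C ∈ CNL
    (C : Type) [CommRing C] [IsLocalRing C] (g : Obr →+* C) [IsLocalHom g]
    (hnoeth : IsNoetherianRing C)
    (hcompl : IsAdicComplete (IsLocalRing.maximalIdeal C) C)
    (hres : Function.Bijective (IsLocalRing.ResidueField.map g))
    -- X_C and X'_C: two deformations of X̄ to C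
    (XC XC' : FormalMod.FormalOModule O C (g.comp (algebraMap O Obr)))
    (hXC : PowerSeries.map (PowerSeries.map (IsLocalRing.residue C)) XC.F
        = PowerSeries.map (PowerSeries.map (IsLocalRing.ResidueField.map g)) Xbar.F ∧
      ∀ c, PowerSeries.map (IsLocalRing.residue C) (XC.act c)
        = PowerSeries.map (IsLocalRing.ResidueField.map g) (Xbar.act c))
    (hXC' : PowerSeries.map (PowerSeries.map (IsLocalRing.residue C)) XC'.F
        = PowerSeries.map (PowerSeries.map (IsLocalRing.ResidueField.map g)) Xbar.F ∧
      ∀ c, PowerSeries.map (IsLocalRing.residue C) (XC'.act c)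
        = PowerSeries.map (IsLocalRing.ResidueField.map g) (Xbar.act c))
    -- β, β': two isomorphisms of formal O-modules X_C → X'_C over C reducing to
    -- the identity modulo m_C
    (β β' : PowerSeries C)
    (hβ : FormalMod.IsModuleHom XC XC' β ∧
      (∃ βi, FormalMod.IsModuleHom XC' XC βi ∧
        FormalMod.comp β βi = PowerSeries.X ∧ FormalMod.comp βi β = PowerSeries.X) ∧
      (∀ n, n ≠ 1 → PowerSeries.coeff (R := C) n β ∈ IsLocalRing.maximalIdeal C) ∧
      PowerSeries.coeff (R := C) 1 β - 1 ∈ IsLocalRing.maximalIdeal C)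
    (hβ' : FormalMod.IsModuleHom XC XC' β' ∧
      (∃ βi, FormalMod.IsModuleHom XC' XC βi ∧
        FormalMod.comp β' βi = PowerSeries.X ∧ FormalMod.comp βi β' = PowerSeries.X) ∧
      (∀ n, n ≠ 1 → PowerSeries.coeff (R := C) n β' ∈ IsLocalRing.maximalIdeal C) ∧
      PowerSeries.coeff (R := C) 1 β' - 1 ∈ IsLocalRing.maximalIdeal C) :
    -- then β = β'
    β = β' := by
  classical
  obtain ⟨hβmod, _, hβcoef, hβ1⟩ := hβ
  obtain ⟨hβ'mod, _, hβ'coef, hβ'1⟩ := hβ'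
  set I := IsLocalRing.maximalIdeal C with hI
  set q := Nat.card (IsLocalRing.ResidueField O) with hq
  obtain ⟨γ, hγ0, hγ1, hγact⟩ := hht
  set Q := q ^ h with hQdef
  have hq1 : 1 ≤ q := Nat.card_pos
  have hQ1 : 1 ≤ Q := Nat.one_le_pow _ _ hq1
  set f := IsLocalRing.ResidueField.map g with hf
  set r := IsLocalRing.residue C with hr
  set u := XC.act ϖ with hu
  set v := XC'.act ϖ with hv
  set γ' := PowerSeries.map f γ with hγ'def
  have hu_red : PowerSeries.map r u = FormalMod.comp γ' (PowerSeries.X ^ Q) := by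
    rw [hu, hXC.2 ϖ, hγact, map_comp', map_pow, PowerSeries.map_X]
  have hv_red : PowerSeries.map r v = FormalMod.comp γ' (PowerSeries.X ^ Q) := by
    rw [hv, hXC'.2 ϖ, hγact, map_comp', map_pow, PowerSeries.map_X]
  have hγ'0 : PowerSeries.coeff 0 γ' = 0 := by
    rw [hγ'def, PowerSeries.coeff_map, PowerSeries.coeff_zero_eq_constantCoeff, hγ0, map_zero]
  have hγ'1 : PowerSeries.coeff 1 γ' ≠ 0 := by
    rw [hγ'def, PowerSeries.coeff_map]
    intro hz
    exact hγ1 (hres.1 (by rw [hz, map_zero]))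
  -- characteristic
  have hqk : ((q : IsLocalRing.ResidueField O)) = 0 := by
    haveI : Fintype (IsLocalRing.ResidueField O) := Fintype.ofFinite _
    rw [hq, Nat.card_eq_fintype_card]
    exact FiniteField.cast_card_eq_zero _
  have hQC : ((Q : IsLocalRing.ResidueField C)) = 0 := by
    have hqC : ((q : IsLocalRing.ResidueField C)) = 0 := by
      have := congrArg (f.comp (IsLocalRing.ResidueField.map (algebraMap O Obr))) hqk
      simpa [map_natCast] using this
    rw [hQdef]; push_cast; rw [hqC]; exact zero_pow (by omega)
  -- properties of u and v
  have hu_lt : ∀ j, j < Q → PowerSeries.coeff (R := C) j u ∈ I := by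
    intro j hj
    have hz : r (PowerSeries.coeff (R := C) j u) = 0 := by
      rw [← PowerSeries.coeff_map, hu_red]
      exact compXpow_lt hγ'0 hj
    exact Ideal.Quotient.eq_zero_iff_mem.1 hz
  have hu_Q : PowerSeries.coeff (R := C) Q u ∉ I := by
    intro hmem
    have hz : r (PowerSeries.coeff (R := C) Q u) = 0 := Ideal.Quotient.eq_zero_iff_mem.2 hmem
    rw [← PowerSeries.coeff_map, hu_red, compXpow_Q γ' hQ1] at hz
    exact hγ'1 hz
  have hv_der : ∀ k : ℕ, (k : C) * PowerSeries.coeff (R := C) k v ∈ I := by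
    intro k
    have hz : r ((k : C) * PowerSeries.coeff (R := C) k v) = 0 := by
      have hstep : r ((k : C) * PowerSeries.coeff (R := C) k v)
          = (k : IsLocalRing.ResidueField C) * PowerSeries.coeff k (PowerSeries.map r v) := by
        rw [map_mul, map_natCast, PowerSeries.coeff_map]
      rw [hstep, hv_red]
      exact compXpow_der γ' hQC k
    exact Ideal.Quotient.eq_zero_iff_mem.1 hz
  -- the key equation
  have hbig : FormalMod.comp (β' - β) u = FormalMod.comp v β' - FormalMod.comp v β := by
    rw [comp_sub', hβmod.2.2 ϖ, hβ'mod.2.2 ϖ]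
  -- base case
  have hε0 : PowerSeries.coeff (R := C) 0 (β' - β) = 0 := by
    simp only [map_sub, PowerSeries.coeff_zero_eq_constantCoeff, hβmod.1, hβ'mod.1, sub_zero]
  have hε1 : ∀ k, PowerSeries.coeff (R := C) k (β' - β) ∈ I ^ 1 := by
    intro k
    rw [pow_one, map_sub]
    rcases eq_or_ne k 1 with rfl | hk
    · have := sub_mem hβ'1 hβ1
      simpa using this
    · exact sub_mem (hβ'coef k hk) (hβcoef k hk)
  -- induction
  have hstep : ∀ n : ℕ, 1 ≤ n → (∀ k, PowerSeries.coeff (R := C) k (β' - β) ∈ I ^ n) →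
      ∀ k, PowerSeries.coeff (R := C) k (β' - β) ∈ I ^ (n + 1) := by
    intro n hn hcur
    refine lemB n Q hQ1 (β' - β) u hε0 hcur ?_ hu_lt hu_Q
    intro m
    rw [hbig]
    exact lemA I n hn v β β' hcur hv_der m
  have hall : ∀ n : ℕ, ∀ k, PowerSeries.coeff (R := C) k (β' - β) ∈ I ^ (n + 1) := by
    intro n
    induction n with
    | zero => exact hε1
    | succ n ih => exact hstep (n + 1) (by omega) ih
  -- Hausdorff conclusion
  have hzero : ∀ k, PowerSeries.coeff (R := C) k (β' - β) = 0 := by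
    intro k
    refine hcompl.toIsHausdorff.haus _ ?_
    intro n
    rw [SModEq.zero, smul_eq_mul, Ideal.mul_top]
    rcases n with _ | n
    · simp
    · exact hall n k
  have hsub : β' - β = 0 := PowerSeries.ext fun k => by rw [hzero k, map_zero]
  exact (sub_eq_zero.mp hsub).symm


end
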